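/- Define the ternary operation f on the set {0,1,2} by: f(x_1,x_2,x_3) = x_1+x_2+x_3 (mod 2) if x_1,x_2,x_3 ∈ {0,1}; f(x_1,x_2,x_3) = 2 if x_1 = x_2 = x_3 = 2; and otherwise f(x_1,x_2,x_3) is the first element among x_1,x_2,x_3 that is different from 2. Then: (i) for every odd m ≥ 3, Clo({f}) contains a WNU operation of arity m; and (ii) for all k,ℓ,j ≥ 1, Clo({f}) contains no operation g of arity k+ℓ+j such that for all x,y,z ∈ {0,1,2}, g is symmetric on the tuple consisting of k copies of x, followed by ℓ copies of y, followed by j copies of z. -/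

import Mathlib

namespace ZhukPaper

/-- An `n`-ary operation on a set `A`. -/
abbrev Op (A : Type*) (n : ℕ) : Type _ := (Fin n → A) → A

/-- A functional signature: a type of symbols together with arities. -/
structure Signature where
  symbols : Type
  arity : symbols → ℕ

/-- An algebra over the signature `S` with carrier `A`. -/
structure AlgOn (S : Signature) (A : Type*) where
  op : ∀ s : S.symbols, Op A (S.arity s)

/-- The signature with a single `n`-ary function symbol. -/
def Sig1 (n : ℕ) : Signature := ⟨Unit, fun _ => n⟩

/-- The algebra whose unique basic operation is `w`. -/
def alg1 {A : Type*} {n : ℕ} (w : Op A n) : AlgOn (Sig1 n) A := ⟨fun _ => w⟩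

/-- An operation is idempotent if it returns `x` on the constant tuple `(x,…,x)`. -/
def IsIdem {A : Type*} {n : ℕ} (w : Op A n) : Prop := ∀ a : A, (w fun _ => a) = a

/-- A weak near-unanimity operation:
`w(y,x,…,x) = w(x,y,x,…,x) = … = w(x,…,x,y)` for all `x, y`. -/
def IsWNU {A : Type*} {n : ℕ} (w : Op A n) : Prop :=
  ∀ (x y : A) (i j : Fin n),
    w (Function.update (fun _ => x) i y) = w (Function.update (fun _ => x) j y)

/-- A special idempotent WNU: additionally `w(x,…,x,w(x,…,x,y)) = w(x,…,x,y)`. -/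
def IsSpecialWNU {A : Type*} {n : ℕ} (w : Op A n) : Prop :=
  IsIdem w ∧ IsWNU w ∧
    ∀ (x y : A) (i : Fin n),
      w (Function.update (fun _ => x) i (w (Function.update (fun _ => x) i y))) =
        w (Function.update (fun _ => x) i y)

/-- The clone of term operations of an algebra: the smallest set of finitary operations
containing the basic operations and all projections and closed under composition. -/
inductive Clo {S : Signature} {A : Type*} (α : AlgOn S A) : ∀ {k : ℕ}, Op A k → Prop
  | proj {k : ℕ} (i : Fin k) : Clo α fun x => x i
  | comp {k : ℕ} (s : S.symbols) (h : Fin (S.arity s) → Op A k)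
      (ih : ∀ i, Clo α (h i)) : Clo α fun x => α.op s fun i => h i x

/-- The clone generated by the basic operations together with all constants. -/
inductive PolClo {S : Signature} {A : Type*} (α : AlgOn S A) : ∀ {k : ℕ}, Op A k → Prop
  | proj {k : ℕ} (i : Fin k) : PolClo α fun x => x i
  | const {k : ℕ} (a : A) : PolClo α fun _ : Fin k → A => a
  | comp {k : ℕ} (s : S.symbols) (h : Fin (S.arity s) → Op A k)
      (ih : ∀ i, PolClo α (h i)) : PolClo α fun x => α.op s fun i => h i x

/-- All basic operations are idempotent. -/
def IsIdemAlg {S : Signature} {A : Type*} (α : AlgOn S A) : Prop := ∀ s, IsIdem (α.op s)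

/-- The algebra has a WNU term operation. -/
def HasWNUTerm {S : Signature} {A : Type*} (α : AlgOn S A) : Prop :=
  ∃ n : ℕ, 2 ≤ n ∧ ∃ f : Op A n, Clo α f ∧ IsWNU f

/-- `B` is a subuniverse: closed under all basic operations. -/
def Subuniv {S : Signature} {A : Type*} (α : AlgOn S A) (B : Set A) : Prop :=
  ∀ (s : S.symbols) (t : Fin (S.arity s) → A), (∀ i, t i ∈ B) → α.op s t ∈ B

/-- A binary relation is a subalgebra of the product of two (same-signature) algebras. -/
def Subalg2 {S : Signature} {A B : Type*} (α : AlgOn S A) (β : AlgOn S B)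
    (R : Set (A × B)) : Prop :=
  ∀ (s : S.symbols) (t : Fin (S.arity s) → A × B), (∀ i, t i ∈ R) →
    (α.op s fun i => (t i).1, β.op s fun i => (t i).2) ∈ R

/-- A ternary relation that is a subalgebra of a triple product. -/
def Subalg3 {S : Signature} {A B C : Type*} (α : AlgOn S A) (β : AlgOn S B) (γ : AlgOn S C)
    (R : Set (A × B × C)) : Prop :=
  ∀ (s : S.symbols) (t : Fin (S.arity s) → A × B × C), (∀ i, t i ∈ R) →
    (α.op s fun i => (t i).1, β.op s fun i => (t i).2.1, γ.op s fun i => (t i).2.2) ∈ R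

/-- A 4-ary relation (grouped as pairs of pairs) that is a subalgebra of `A²×B²`. -/
def Subalg4 {S : Signature} {A B : Type*} (α : AlgOn S A) (β : AlgOn S B)
    (δ : Set ((A × A) × (B × B))) : Prop :=
  ∀ (s : S.symbols) (t : Fin (S.arity s) → (A × A) × (B × B)), (∀ i, t i ∈ δ) →
    ((α.op s fun i => (t i).1.1, α.op s fun i => (t i).1.2),
      (β.op s fun i => (t i).2.1, β.op s fun i => (t i).2.2)) ∈ δ

/-- A congruence: an equivalence relation which is a subalgebra of `A × A`. -/
def IsCong {S : Signature} {A : Type*} (α : AlgOn S A) (σ : Set (A × A)) : Prop :=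
  Equivalence (fun a b : A => (a, b) ∈ σ) ∧ Subalg2 α α σ

/-- The first variable of the binary relation `δ` is stable under `σ`. -/
def StableFst {A B : Type*} (σ : Set (A × A)) (δ : Set (A × B)) : Prop :=
  ∀ a b a', (a, b) ∈ δ → (a, a') ∈ σ → (a', b) ∈ δ

/-- The second variable of the binary relation `δ` is stable under `σ`. -/
def StableSnd {A B : Type*} (σ : Set (B × B)) (δ : Set (A × B)) : Prop :=
  ∀ a b b', (a, b) ∈ δ → (b, b') ∈ σ → (a, b') ∈ δ

/-- An irreducible congruence: it cannot be represented as an intersection of binary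
subalgebras of `A × A`, each different from `σ` and stable under `σ`. -/
def IsIrred {S : Signature} {A : Type*} (α : AlgOn S A) (σ : Set (A × A)) : Prop :=
  IsCong α σ ∧
    ¬ ∃ F : Set (Set (A × A)),
        (∀ δ ∈ F, Subalg2 α α δ ∧ StableFst σ δ ∧ StableSnd σ δ ∧ δ ≠ σ) ∧ ⋂₀ F = σ

/-- `σs` is `σ*`: the minimal subalgebra `δ ≤ A×A` with `δ ⊋ σ` and `δ` stable under `σ`. -/
def IsMinCover {S : Signature} {A : Type*} (α : AlgOn S A) (σ σs : Set (A × A)) : Prop :=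
  (Subalg2 α α σs ∧ StableFst σ σs ∧ StableSnd σ σs ∧ σ ⊂ σs) ∧
    ∀ δ : Set (A × A), Subalg2 α α δ → StableFst σ δ → StableSnd σ δ → σ ⊂ δ → σs ⊆ δ

/-- A bridge from the congruence `σ₁` on `A₁` to the congruence `σ₂` on `A₂`. -/
structure IsBridge {S : Signature} {A₁ A₂ : Type*} (α₁ : AlgOn S A₁) (α₂ : AlgOn S A₂)
    (σ₁ : Set (A₁ × A₁)) (σ₂ : Set (A₂ × A₂))
    (δ : Set ((A₁ × A₁) × (A₂ × A₂))) : Prop where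
  subalg : Subalg4 α₁ α₂ δ
  stable1 : ∀ q ∈ δ, ∀ a', (q.1.1, a') ∈ σ₁ → ((a', q.1.2), q.2) ∈ δ
  stable2 : ∀ q ∈ δ, ∀ a', (q.1.2, a') ∈ σ₁ → ((q.1.1, a'), q.2) ∈ δ
  stable3 : ∀ q ∈ δ, ∀ b', (q.2.1, b') ∈ σ₂ → (q.1, (b', q.2.2)) ∈ δ
  stable4 : ∀ q ∈ δ, ∀ b', (q.2.2, b') ∈ σ₂ → (q.1, (q.2.1, b')) ∈ δ
  proj12 : σ₁ ⊂ Prod.fst '' δ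
  proj34 : σ₂ ⊂ Prod.snd '' δ
  congr_iff : ∀ q ∈ δ, (q.1 ∈ σ₁ ↔ q.2 ∈ σ₂)

/-- `δ̃(x,y) = δ(x,x,y,y)`. -/
def tilde {A₁ A₂ : Type*} (δ : Set ((A₁ × A₁) × (A₂ × A₂))) : Set (A₁ × A₂) :=
  {q | ((q.1, q.1), (q.2, q.2)) ∈ δ}

/-- Composition of binary relations. -/
def relComp {A B C : Type*} (R : Set (A × B)) (Q : Set (B × C)) : Set (A × C) :=
  {p | ∃ b, (p.1, b) ∈ R ∧ (b, p.2) ∈ Q}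

/-- The basic operation of the algebra `Z_p`: the sum of `n` elements modulo `p`. -/
def zmodOp (n p : ℕ) : Op (ZMod p) n := fun x => ∑ i, x i

/-- `σ` is a linear congruence with `σ* = σs`. -/
def IsLinearWith {S : Signature} {A : Type*} (α : AlgOn S A) (σ σs : Set (A × A)) : Prop :=
  IsIrred α σ ∧ IsMinCover α σ σs ∧ IsCong α σs ∧
    ∃ p : ℕ, p.Prime ∧
      ∃ SS : Set ((A × A) × (A × A)),
        Subalg4 α α SS ∧
        (∀ q ∈ SS, (q.1.1, q.1.2) ∈ σs ∧ (q.1.1, q.2.1) ∈ σs ∧ (q.1.1, q.2.2) ∈ σs ∧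
            (q.1.2, q.2.1) ∈ σs ∧ (q.1.2, q.2.2) ∈ σs ∧ (q.2.1, q.2.2) ∈ σs) ∧
        ∀ a : A, ∃ (m : ℕ) (φ : {x : A // (a, x) ∈ σs} → Fin m → ZMod p),
          Function.Surjective φ ∧
          (∀ x y, φ x = φ y ↔ ((x : A), (y : A)) ∈ σ) ∧
          ∀ x y z u : {x : A // (a, x) ∈ σs},
            (((x : A), (y : A)), ((z : A), (u : A))) ∈ SS ↔ φ x - φ y = φ z - φ u

/-- A linear congruence. -/
def IsLinearCon {S : Signature} {A : Type*} (α : AlgOn S A) (σ : Set (A × A)) : Prop :=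
  ∃ σs, IsLinearWith α σ σs

/-- A PC congruence: an irreducible congruence that is not linear. -/
def IsPCCon {S : Signature} {A : Type*} (α : AlgOn S A) (σ : Set (A × A)) : Prop :=
  IsIrred α σ ∧ ¬ IsLinearCon α σ

/-- `σ` is a perfect linear congruence (with `σ* = σs`) on the algebra `(A; w)`. -/
def IsPerfLinWith {A : Type*} {n : ℕ} (w : Op A n) (σ σs : Set (A × A)) : Prop :=
  IsIrred (alg1 w) σ ∧ IsMinCover (alg1 w) σ σs ∧
    ∃ p : ℕ, p.Prime ∧
      ∃ ζ : Set (A × A × ZMod p),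
        Subalg3 (alg1 w) (alg1 w) (alg1 (zmodOp n p)) ζ ∧
        {q : A × A | ∃ c, (q.1, q.2, c) ∈ ζ} = σs ∧
        ∀ a b c, (a, b, c) ∈ ζ → ((a, b) ∈ σ ↔ c = 0)

/-- `C` is an absorbing subuniverse of the subalgebra `B`. -/
def IsAbsorbingIn {S : Signature} {A : Type*} (α : AlgOn S A) (C B : Set A) : Prop :=
  C ⊆ B ∧ Subuniv α C ∧
    ∃ (m : ℕ) (t : Op A m), Clo α t ∧
      ∀ (j : Fin m) (x : Fin m → A), (∀ i, i ≠ j → x i ∈ C) → x j ∈ B → t x ∈ C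

/-- `C` is a binary absorbing subuniverse of the subalgebra `B`. -/
def IsBAIn {S : Signature} {A : Type*} (α : AlgOn S A) (C B : Set A) : Prop :=
  C ⊆ B ∧ Subuniv α C ∧
    ∃ t : Op A 2, Clo α t ∧
      ∀ (j : Fin 2) (x : Fin 2 → A), (∀ i, i ≠ j → x i ∈ C) → x j ∈ B → t x ∈ C

/-- The subalgebra of `A × A` generated by a set of pairs. -/
def Sg2 {S : Signature} {A : Type*} (α : AlgOn S A) (X : Set (A × A)) : Set (A × A) :=
  ⋂₀ {R : Set (A × A) | Subalg2 α α R ∧ X ⊆ R}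

/-- `C` is a central subuniverse of the subalgebra `B`. -/
def IsCentralIn {S : Signature} {A : Type*} (α : AlgOn S A) (C B : Set A) : Prop :=
  IsAbsorbingIn α C B ∧
    ∀ a ∈ B, a ∉ C → (a, a) ∉ Sg2 α (({a} : Set A) ×ˢ C ∪ C ×ˢ ({a} : Set A))

/-- `B` is a binary absorbing subuniverse of the whole algebra. -/
def IsBA {S : Signature} {A : Type*} (α : AlgOn S A) (B : Set A) : Prop :=
  IsBAIn α B Set.univ

/-- `C` is a central subuniverse of the whole algebra. -/
def IsCentral {S : Signature} {A : Type*} (α : AlgOn S A) (C : Set A) : Prop :=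
  IsCentralIn α C Set.univ

/-- The algebra has no proper nonempty binary absorbing subuniverse and no
proper nonempty central subuniverse. -/
def BACFree {S : Signature} {A : Type*} (α : AlgOn S A) : Prop :=
  (∀ B : Set A, IsBA α B → B.Nonempty → B = Set.univ) ∧
    ∀ B : Set A, IsCentral α B → B.Nonempty → B = Set.univ

/-- The setoid of a binary relation which is an equivalence relation. -/
def relSetoid {A : Type*} (σ : Set (A × A))
    (h : Equivalence fun a b : A => (a, b) ∈ σ) : Setoid A := ⟨fun a b => (a, b) ∈ σ, h⟩

/-- The setoid induced on a subset `B` by an equivalence relation on `A`. -/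
def relSetoidOn {A : Type*} (σ : Set (A × A))
    (h : Equivalence fun a b : A => (a, b) ∈ σ) (B : Set A) : Setoid B :=
  ⟨fun a b => ((a : A), (b : A)) ∈ σ,
    ⟨fun a => h.refl (a : A), fun hab => h.symm hab, fun hab hbc => h.trans hab hbc⟩⟩

/-- The subalgebra on a subuniverse `B`. -/
def restrictAlg {S : Signature} {A : Type*} (α : AlgOn S A) (B : Set A)
    (hB : Subuniv α B) : AlgOn S B where
  op s t := ⟨α.op s fun i => (t i : A), hB s _ fun i => (t i).2⟩

/-- The quotient algebra modulo a setoid (operations computed on representatives). -/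
noncomputable def quotAlg {S : Signature} {A : Type*} (α : AlgOn S A) (st : Setoid A) :
    AlgOn S (Quotient st) where
  op s t := Quotient.mk st (α.op s fun i => (t i).out)

/-- The six types of (strong) subuniverses: binary absorbing, central, strong,
linear, PC and dividing. -/
inductive SubT : Type
  | BA | Cen | Str | Lin | PC | Div

/-- `C <_{D(σ)}^{A} B`: the dividing-subuniverse relation. -/
def SubRelD {S : Signature} {A : Type*} (α : AlgOn S A) (σ : Set (A × A))
    (C B : Set A) : Prop :=
  Subuniv α B ∧ Subuniv α C ∧ C.Nonempty ∧ C ⊂ B ∧ IsIrred α σ ∧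
    (∃ σs, IsMinCover α σ σs ∧ B ×ˢ B ⊆ σs) ∧
    (∃ a : A, C = B ∩ {x | (a, x) ∈ σ}) ∧
    ∀ (hB : Subuniv α B) (he : Equivalence fun a b : A => (a, b) ∈ σ),
      BACFree (quotAlg (restrictAlg α B hB) (relSetoidOn σ he B))

/-- `C <_{T(σ)}^{A} B`. -/
def SubRel {S : Signature} {A : Type*} (α : AlgOn S A) :
    SubT → Set (A × A) → Set A → Set A → Prop
  | SubT.BA, σ, C0, B0 =>
      Subuniv α B0 ∧ C0.Nonempty ∧ C0 ⊂ B0 ∧ IsBAIn α C0 B0 ∧ σ = Set.univ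
  | SubT.Cen, σ, C0, B0 =>
      Subuniv α B0 ∧ C0.Nonempty ∧ C0 ⊂ B0 ∧ IsCentralIn α C0 B0 ∧ σ = Set.univ
  | SubT.Str, σ, C0, B0 =>
      Subuniv α B0 ∧ Subuniv α C0 ∧ C0.Nonempty ∧ C0 ⊂ B0 ∧
        (∃ D0 : Set A, IsBAIn α D0 B0 ∧ IsCentralIn α D0 B0 ∧ D0 ⊆ C0) ∧ σ = Set.univ
  | SubT.Div, σ, C0, B0 => SubRelD α σ C0 B0
  | SubT.Lin, σ, C0, B0 => SubRelD α σ C0 B0 ∧ IsLinearCon α σ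
  | SubT.PC, σ, C0, B0 => SubRelD α σ C0 B0 ∧ IsPCCon α σ

/-- `C ⋘^{A} B`: a chain of subuniverses of the types BA, central, strong, dividing. -/
inductive Chain {S : Signature} {A : Type*} (α : AlgOn S A) : Set A → Set A → Prop
  | refl (B : Set A) : Chain α B B
  | step {C E B : Set A} (T : SubT) (σ : Set (A × A))
      (hT : T = SubT.BA ∨ T = SubT.Cen ∨ T = SubT.Str ∨ T = SubT.Div)
      (h : SubRel α T σ C E) (hch : Chain α E B) : Chain α C B

/-- `g` is symmetric on the tuple `a`. -/
def SymmOnTuple {A : Type*} {n : ℕ} (g : Op A n) (a : Fin n → A) : Prop :=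
  ∀ π : Equiv.Perm (Fin n), (g fun k => a (π k)) = g a

/-- `g` is XY-symmetric: symmetric on every tuple `(x,…,x,y,…,y)`. -/
def XYSym {A : Type*} {n : ℕ} (g : Op A n) : Prop :=
  ∀ (x y : A) (i : ℕ), SymmOnTuple g fun k => if (k : ℕ) < i then x else y

/-- The coordinatewise operation on a product. -/
def prodOp {A B : Type*} {n : ℕ} (wA : Op A n) (wB : Op B n) : Op (A × B) n :=
  fun x => (wA fun i => (x i).1, wB fun i => (x i).2)

/-- The operation induced on a quotient (computed on representatives). -/
noncomputable def quotOp {A : Type*} {n : ℕ} (w : Op A n) (st : Setoid A) : Op (Quotient st) n :=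
  fun x => Quotient.mk st (w fun i => (x i).out)

/-- Membership in `B ⊠ Z_p`: the first coordinate of the operation is `w_B`, the second
coordinate is `f(x₁⁽¹⁾,…,xₙ⁽¹⁾) + a₁·x₁⁽²⁾ + … + aₙ·xₙ⁽²⁾`. -/
def InBoxProd {B : Type*} {n : ℕ} (wB : Op B n) (p : ℕ) (wA : Op (B × ZMod p) n) : Prop :=
  (∀ x, (wA x).1 = wB fun i => (x i).1) ∧
    ∃ (f : (Fin n → B) → ZMod p) (a : Fin n → ZMod p),
      ∀ x, (wA x).2 = f (fun i => (x i).1) + ∑ i, a i * (x i).2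

/-- An Abelian algebra. -/
def IsAbelian {S : Signature} {A : Type*} (α : AlgOn S A) : Prop :=
  ∀ (n : ℕ) (t : Op A (n + 1)), Clo α t →
    ∀ (x y : A) (u v : Fin n → A),
      t (Fin.cons x u) = t (Fin.cons x v) → t (Fin.cons y u) = t (Fin.cons y v)

/-- A binary relation is linked: the corresponding bipartite graph is connected. -/
def Linked {A B : Type*} (R : Set (A × B)) : Prop :=
  ∀ a a' : A, (∃ b, (a, b) ∈ R) → (∃ b, (a', b) ∈ R) →
    Relation.ReflTransGen (fun x y : A => ∃ b, (x, b) ∈ R ∧ (y, b) ∈ R) a a'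

/-- A polynomially complete algebra. -/
def PolyComplete {S : Signature} {A : Type*} (α : AlgOn S A) : Prop :=
  ∀ (k : ℕ) (g : Op A k), PolClo α g

open Fin.NatCast in
/-- The concrete ternary operation on `{0,1,2}`. -/
def f1 : Op (Fin 3) 3 := fun x =>
  if x 0 ≠ 2 ∧ x 1 ≠ 2 ∧ x 2 ≠ 2 then
    ((((x 0 : ℕ) + (x 1 : ℕ) + (x 2 : ℕ)) % 2 : ℕ) : Fin 3)
  else if x 0 = 2 ∧ x 1 = 2 ∧ x 2 = 2 then 2
  else if x 0 ≠ 2 then x 0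
  else if x 1 ≠ 2 then x 1
  else x 2

/-! ### Part 1 auxiliaries -/

def f3 (a b c : Fin 3) : Fin 3 := f1 ![a, b, c]

lemma f1_eq_f3 (g : Fin 3 → Fin 3) : f1 g = f3 (g 0) (g 1) (g 2) := by
  have h : ![g 0, g 1, g 2] = g := by
    funext j; fin_cases j <;> rfl
  rw [f3, h]

def Vfun (x y : Fin 3) : Fin 3 := if y = 2 then x else y

lemma update_eq_ite {m : ℕ} (x y : Fin 3) (i : Fin m) :
    Function.update (fun _ => x) i y = fun j => if j = i then y else x := by
  funext j; simp [Function.update_apply]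

lemma clo_sub {S : Signature} {A : Type*} {α : AlgOn S A} {k k' : ℕ} {g : Op A k}
    (hg : Clo α g) (σ : Fin k → Fin k') : Clo α (fun x => g (fun i => x (σ i))) := by
  induction hg with
  | proj i => exact Clo.proj (σ i)
  | comp s h _ ih2 => exact Clo.comp s (fun i x => h i (fun j => x (σ j))) (fun i => ih2 i)

lemma f3_base : ∀ (x y : Fin 3) (i : Fin 3),
    f1 (fun j => if j = i then y else x) = Vfun x y := by decide

lemma f1_idem : ∀ x : Fin 3, f1 (fun _ => x) = x := by decide

lemma f3_Vxx : ∀ x y : Fin 3, f3 (Vfun x y) x x = Vfun x y := by decide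
lemma f3_xyx : ∀ x y : Fin 3, f3 x y x = Vfun x y := by decide
lemma f3_xxy : ∀ x y : Fin 3, f3 x x y = Vfun x y := by decide

def GoodW {m : ℕ} (w : Op (Fin 3) m) : Prop :=
  Clo (alg1 f1) w ∧ (∀ x, w (fun _ => x) = x) ∧
    ∀ (x y : Fin 3) (i : Fin m), w (Function.update (fun _ => x) i y) = Vfun x y


lemma exists_goodW : ∀ n : ℕ, ∃ w : Op (Fin 3) (2*n+3), GoodW w := by
  intro n
  induction n with
  | zero =>
    refine ⟨fun x => (alg1 f1).op () (fun i => x i), ?_, ?_, ?_⟩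
    · exact Clo.comp () (fun i x => x i) (fun i => Clo.proj i)
    · exact f1_idem
    · intro x y i
      rw [update_eq_ite]
      exact f3_base x y i
  | succ n ih =>
    obtain ⟨w, hclo, hid, hupd⟩ := ih
    have h1 : 2*n+3 < 2*n+3 + 2 := by omega
    have h2 : 2*n+3 + 1 < 2*n+3 + 2 := by omega
    have harity : 2*(n+1)+3 = 2*n+3+2 := by omega
    refine ⟨fun x => (alg1 f1).op ()
      (fun i => (![fun x => w (fun jj => x (Fin.castAdd 2 jj)),
                   fun x => x ⟨2*n+3, h1⟩,
                   fun x => x ⟨2*n+3+1, h2⟩] :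
          Fin 3 → Op (Fin 3) (2*n+3+2)) i x), ?_, ?_, ?_⟩
    · refine Clo.comp () _ ?_
      intro i
      fin_cases i
      · exact clo_sub hclo (Fin.castAdd 2)
      · exact Clo.proj ⟨2*n+3, h1⟩
      · exact Clo.proj ⟨2*n+3+1, h2⟩
    · intro x
      show f3 (w fun _ => x) x x = x
      rw [hid]
      exact f1_idem x
    · intro x y i
      rw [update_eq_ite]
      show f3 ((fun t => w (fun jj => t (Fin.castAdd 2 jj)))
              (fun jj => if jj = i then y else x))
           (if (⟨2*n+3, h1⟩ : Fin (2*n+3+2)) = i then y else x)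
           (if (⟨2*n+3+1, h2⟩ : Fin (2*n+3+2)) = i then y else x) = Vfun x y
      rcases lt_trichotomy (i : ℕ) (2*n+3) with hi | hi | hi
      · have harg : (fun jj : Fin (2*n+3) => (if Fin.castAdd 2 jj = i then y else x))
            = (fun jj => if jj = (⟨(i : ℕ), hi⟩ : Fin (2*n+3)) then y else x) := by
          funext jj
          have : (Fin.castAdd 2 jj = i) ↔ (jj = ⟨(i : ℕ), hi⟩) := by
            rw [Fin.ext_iff, Fin.ext_iff]
            simp
          exact if_congr this rfl rfl
        have e1 : (⟨2*n+3, h1⟩ : Fin (2*n+3+2)) ≠ i := by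
          intro h; have hv := congrArg Fin.val h; simp at hv; omega
        have e2 : (⟨2*n+3+1, h2⟩ : Fin (2*n+3+2)) ≠ i := by
          intro h; have hv := congrArg Fin.val h; simp at hv; omega
        rw [if_neg e1, if_neg e2]
        show f3 (w (fun jj => if Fin.castAdd 2 jj = i then y else x)) x x = Vfun x y
        rw [harg, ← update_eq_ite, hupd]
        exact f3_Vxx x y
      · have e1 : (⟨2*n+3, h1⟩ : Fin (2*n+3+2)) = i := by
          simp [Fin.ext_iff, hi]
        have e2 : (⟨2*n+3+1, h2⟩ : Fin (2*n+3+2)) ≠ i := by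
          intro h; have hv := congrArg Fin.val h; simp at hv; omega
        have harg : (fun jj : Fin (2*n+3) => (if Fin.castAdd 2 jj = i then y else x))
            = (fun _ : Fin (2*n+3) => x) := by
          funext jj
          have : ¬ (Fin.castAdd 2 jj = i) := by
            intro h; have hv := congrArg Fin.val h; have := jj.isLt
            simp at hv; omega
          exact if_neg this
        rw [if_pos e1, if_neg e2]
        show f3 (w (fun jj => if Fin.castAdd 2 jj = i then y else x)) y x = Vfun x y
        rw [harg, hid]
        exact f3_xyx x y
      · have hi' : (i : ℕ) = 2*n+3+1 := by have := i.isLt; omega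
        have e1 : (⟨2*n+3, h1⟩ : Fin (2*n+3+2)) ≠ i := by
          intro h; have hv := congrArg Fin.val h; simp at hv; omega
        have e2 : (⟨2*n+3+1, h2⟩ : Fin (2*n+3+2)) = i := by
          simp [Fin.ext_iff, hi']
        have harg : (fun jj : Fin (2*n+3) => (if Fin.castAdd 2 jj = i then y else x))
            = (fun _ : Fin (2*n+3) => x) := by
          funext jj
          have : ¬ (Fin.castAdd 2 jj = i) := by
            intro h; have hv := congrArg Fin.val h; have := jj.isLt
            simp at hv; omega
          exact if_neg this
        rw [if_neg e1, if_pos e2]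
        show f3 (w (fun jj => if Fin.castAdd 2 jj = i then y else x)) x y = Vfun x y
        rw [harg, hid]
        exact f3_xxy x y

lemma part1 : ∀ m : ℕ, Odd m → 3 ≤ m → ∃ g : Op (Fin 3) m, Clo (alg1 f1) g ∧ IsWNU g := by
  intro m hodd hm
  obtain ⟨r, hr⟩ := hodd
  have : ∃ n, m = 2*n+3 := ⟨r - 1, by omega⟩
  obtain ⟨n, rfl⟩ := this
  obtain ⟨w, hclo, _, hupd⟩ := exists_goodW n
  exact ⟨w, hclo, fun x y i j => by rw [hupd x y i, hupd x y j]⟩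


/-! ### Part 2: invariant machinery -/

def val2 : Fin 3 → ZMod 2 := fun a => if a = 1 then 1 else 0
def emb : ZMod 2 → Fin 3 := fun c => if c = 1 then 1 else 0

lemma emb_ne_two : ∀ a : ZMod 2, emb a ≠ 2 := by decide
lemma emb_inj : ∀ a b : ZMod 2, emb a = emb b → a = b := by decide
lemma emb_val2 : ∀ a : Fin 3, a ≠ 2 → emb (val2 a) = a := by decide
lemma f3_222 : f3 2 2 2 = 2 := by decide
lemma f3_emb3 : ∀ a b c : ZMod 2, f3 (emb a) (emb b) (emb c) = emb (a+b+c) := by decide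
lemma f3_first : ∀ (a : ZMod 2) (y z : Fin 3), (y = 2 ∨ z = 2) → f3 (emb a) y z = emb a := by
  decide
lemma f3_second : ∀ (b : ZMod 2) (z : Fin 3), f3 2 (emb b) z = emb b := by decide
lemma f3_third : ∀ z : Fin 3, f3 2 2 z = z := by decide

def InvP {n : ℕ} (g : Op (Fin 3) n) : Prop :=
  ∃ V : Finset (Fin n), V.Nonempty ∧
  ∃ c : Set (Fin n) → Fin n → ZMod 2,
  ∀ t : Fin n → Fin 3,
    ((∀ i ∈ V, t i = 2) → g t = 2) ∧
    ((∃ i ∈ V, t i ≠ 2) →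
       (∀ i, t i = 2 → c {i | t i = 2} i = 0) ∧
       (∑ i, c {i | t i = 2} i) = 1 ∧
       g t = emb (∑ i, c {i | t i = 2} i * val2 (t i)))

open Classical in
noncomputable def mix {n : ℕ} (V0 V1 V2 : Finset (Fin n))
    (c0 c1 c2 : Set (Fin n) → Fin n → ZMod 2) : Set (Fin n) → Fin n → ZMod 2 := fun P =>
  if ¬ (V0 : Set (Fin n)) ⊆ P ∧ ¬ (V1 : Set (Fin n)) ⊆ P ∧ ¬ (V2 : Set (Fin n)) ⊆ P
    then (fun i => c0 P i + c1 P i + c2 P i)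
  else if ¬ (V0 : Set (Fin n)) ⊆ P then c0 P
  else if ¬ (V1 : Set (Fin n)) ⊆ P then c1 P
  else c2 P

section mixlem
variable {n : ℕ} {V0 V1 V2 : Finset (Fin n)} {c0 c1 c2 : Set (Fin n) → Fin n → ZMod 2}
  {P : Set (Fin n)}

lemma mix_all (h0 : ¬ (V0 : Set (Fin n)) ⊆ P) (h1 : ¬ (V1 : Set (Fin n)) ⊆ P)
    (h2 : ¬ (V2 : Set (Fin n)) ⊆ P) :
    mix V0 V1 V2 c0 c1 c2 P = fun i => c0 P i + c1 P i + c2 P i := by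
  rw [mix, if_pos ⟨h0, h1, h2⟩]

lemma mix_0 (h0 : ¬ (V0 : Set (Fin n)) ⊆ P)
    (hrest : (V1 : Set (Fin n)) ⊆ P ∨ (V2 : Set (Fin n)) ⊆ P) :
    mix V0 V1 V2 c0 c1 c2 P = c0 P := by
  rw [mix, if_neg (by tauto), if_pos h0]

lemma mix_1 (h0 : (V0 : Set (Fin n)) ⊆ P) (h1 : ¬ (V1 : Set (Fin n)) ⊆ P) :
    mix V0 V1 V2 c0 c1 c2 P = c1 P := by
  rw [mix, if_neg (by tauto), if_neg (by tauto), if_pos h1]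

lemma mix_2 (h0 : (V0 : Set (Fin n)) ⊆ P) (h1 : (V1 : Set (Fin n)) ⊆ P) :
    mix V0 V1 V2 c0 c1 c2 P = c2 P := by
  rw [mix, if_neg (by tauto), if_neg (by tauto), if_neg (by tauto)]

end mixlem

lemma one_one_one : (1 : ZMod 2) + 1 + 1 = 1 := by decide

lemma inv_of_clo {n : ℕ} {g : Op (Fin 3) n} (hg : Clo (alg1 f1) g) : InvP g := by
  classical
  induction hg with
  | proj i =>
    refine ⟨{i}, ⟨i, Finset.mem_singleton_self i⟩,
      fun _ jj => if jj = i then 1 else 0, fun t => ⟨?_, ?_⟩⟩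
    · intro hall
      exact hall i (Finset.mem_singleton_self i)
    · intro htr
      obtain ⟨i', hi', hne⟩ := htr
      rw [Finset.mem_singleton] at hi'
      subst hi'
      refine ⟨?_, ?_, ?_⟩
      · intro jj hjj
        show (if jj = i' then (1:ZMod 2) else 0) = 0
        by_cases hji : jj = i'
        · subst hji; exact absurd hjj hne
        · rw [if_neg hji]
      · show (∑ jj, (if jj = i' then (1:ZMod 2) else 0)) = 1
        simp
      · show t i' = emb (∑ jj, (if jj = i' then (1:ZMod 2) else 0) * val2 (t jj))
        rw [show (∑ jj, (if jj = i' then (1:ZMod 2) else 0) * val2 (t jj))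
            = val2 (t i') from ?_]
        · exact (emb_val2 (t i') hne).symm
        · rw [Finset.sum_eq_single i']
          · rw [if_pos rfl, one_mul]
          · intro b _ hb; rw [if_neg hb, zero_mul]
          · intro hi; exact absurd (Finset.mem_univ i') hi
  | comp s h _ ih =>
    have e0 : (0:ℕ) < (Sig1 3).arity s := by show 0 < 3; omega
    have e1 : (1:ℕ) < (Sig1 3).arity s := by show 1 < 3; omega
    have e2 : (2:ℕ) < (Sig1 3).arity s := by show 2 < 3; omega
    obtain ⟨V0, hV0, c0, H0⟩ := ih ⟨0, e0⟩
    obtain ⟨V1, hV1, c1, H1⟩ := ih ⟨1, e1⟩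
    obtain ⟨V2, hV2, c2, H2⟩ := ih ⟨2, e2⟩
    obtain ⟨iw, hiw⟩ := hV0
    have hgt : ∀ t, ((alg1 f1).op s fun i => h i t)
        = f3 (h ⟨0, e0⟩ t) (h ⟨1, e1⟩ t) (h ⟨2, e2⟩ t) :=
      fun t => f1_eq_f3 (fun i => h i t)
    refine ⟨V0 ∪ V1 ∪ V2, ⟨iw, by simp [Finset.mem_union, hiw]⟩,
      mix V0 V1 V2 c0 c1 c2, fun t => ⟨?_, ?_⟩⟩
    · intro hall
      have h0v : h ⟨0, e0⟩ t = 2 := (H0 t).1 (fun i hi => hall i (by simp [Finset.mem_union, hi]))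
      have h1v : h ⟨1, e1⟩ t = 2 := (H1 t).1 (fun i hi => hall i (by simp [Finset.mem_union, hi]))
      have h2v : h ⟨2, e2⟩ t = 2 := (H2 t).1 (fun i hi => hall i (by simp [Finset.mem_union, hi]))
      show ((alg1 f1).op s fun i => h i t) = 2
      rw [hgt t, h0v, h1v, h2v]
      exact f3_222
    · intro htr
      have hcoe : ∀ (W : Finset (Fin n)), (¬ (W : Set (Fin n)) ⊆ {i | t i = 2}) ↔
          (∃ i ∈ W, t i ≠ 2) := by
        intro W
        constructor
        · intro hns
          by_contra hc
          push_neg at hc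
          exact hns (fun i hi => hc i (Finset.mem_coe.mp hi))
        · rintro ⟨i, hi, hne⟩ hs
          exact hne (hs (Finset.mem_coe.mpr hi))
      by_cases s0 : (V0 : Set (Fin n)) ⊆ {i | t i = 2} <;>
        by_cases s1 : (V1 : Set (Fin n)) ⊆ {i | t i = 2} <;>
        by_cases s2 : (V2 : Set (Fin n)) ⊆ {i | t i = 2}
      · -- all subsets: contradiction with htr
        exfalso
        obtain ⟨i, hi, hne⟩ := htr
        simp only [Finset.mem_union] at hi
        rcases hi with (hi | hi) | hi
        · exact hne (s0 (Finset.mem_coe.mpr hi))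
        · exact hne (s1 (Finset.mem_coe.mpr hi))
        · exact hne (s2 (Finset.mem_coe.mpr hi))
      · -- s0, s1, ¬s2 : use c2
        obtain ⟨hs2, hsum2, hv2⟩ := (H2 t).2 ((hcoe V2).mp s2)
        have h0v : h ⟨0, e0⟩ t = 2 := (H0 t).1 (fun i hi => s0 (Finset.mem_coe.mpr hi))
        have h1v : h ⟨1, e1⟩ t = 2 := (H1 t).1 (fun i hi => s1 (Finset.mem_coe.mpr hi))
        rw [mix_2 s0 s1]
        refine ⟨hs2, hsum2, ?_⟩
        show ((alg1 f1).op s fun i => h i t) = _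
        rw [hgt t, h0v, h1v, hv2, f3_third]
      · -- s0, ¬s1, s2 : use c1
        obtain ⟨hs1, hsum1, hv1⟩ := (H1 t).2 ((hcoe V1).mp s1)
        have h0v : h ⟨0, e0⟩ t = 2 := (H0 t).1 (fun i hi => s0 (Finset.mem_coe.mpr hi))
        rw [mix_1 s0 s1]
        refine ⟨hs1, hsum1, ?_⟩
        show ((alg1 f1).op s fun i => h i t) = _
        rw [hgt t, h0v, hv1, f3_second]
      · -- s0, ¬s1, ¬s2 : use c1
        obtain ⟨hs1, hsum1, hv1⟩ := (H1 t).2 ((hcoe V1).mp s1)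
        have h0v : h ⟨0, e0⟩ t = 2 := (H0 t).1 (fun i hi => s0 (Finset.mem_coe.mpr hi))
        rw [mix_1 s0 s1]
        refine ⟨hs1, hsum1, ?_⟩
        show ((alg1 f1).op s fun i => h i t) = _
        rw [hgt t, h0v, hv1, f3_second]
      · -- ¬s0, s1, s2 : use c0
        obtain ⟨hs0, hsum0, hv0⟩ := (H0 t).2 ((hcoe V0).mp s0)
        have h1v : h ⟨1, e1⟩ t = 2 := (H1 t).1 (fun i hi => s1 (Finset.mem_coe.mpr hi))
        rw [mix_0 s0 (Or.inl s1)]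
        refine ⟨hs0, hsum0, ?_⟩
        show ((alg1 f1).op s fun i => h i t) = _
        rw [hgt t, hv0]
        exact f3_first _ _ _ (Or.inl h1v)
      · -- ¬s0, s1, ¬s2 : use c0
        obtain ⟨hs0, hsum0, hv0⟩ := (H0 t).2 ((hcoe V0).mp s0)
        have h1v : h ⟨1, e1⟩ t = 2 := (H1 t).1 (fun i hi => s1 (Finset.mem_coe.mpr hi))
        rw [mix_0 s0 (Or.inl s1)]
        refine ⟨hs0, hsum0, ?_⟩
        show ((alg1 f1).op s fun i => h i t) = _
        rw [hgt t, hv0]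
        exact f3_first _ _ _ (Or.inl h1v)
      · -- ¬s0, ¬s1, s2 : use c0
        obtain ⟨hs0, hsum0, hv0⟩ := (H0 t).2 ((hcoe V0).mp s0)
        have h2v : h ⟨2, e2⟩ t = 2 := (H2 t).1 (fun i hi => s2 (Finset.mem_coe.mpr hi))
        rw [mix_0 s0 (Or.inr s2)]
        refine ⟨hs0, hsum0, ?_⟩
        show ((alg1 f1).op s fun i => h i t) = _
        rw [hgt t, hv0]
        exact f3_first _ _ _ (Or.inr h2v)
      · -- ¬s0, ¬s1, ¬s2 : sum
        obtain ⟨hs0, hsum0, hv0⟩ := (H0 t).2 ((hcoe V0).mp s0)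
        obtain ⟨hs1, hsum1, hv1⟩ := (H1 t).2 ((hcoe V1).mp s1)
        obtain ⟨hs2, hsum2, hv2⟩ := (H2 t).2 ((hcoe V2).mp s2)
        rw [mix_all s0 s1 s2]
        refine ⟨?_, ?_, ?_⟩
        · intro i hi
          show c0 {i | t i = 2} i + c1 {i | t i = 2} i + c2 {i | t i = 2} i = 0
          rw [hs0 i hi, hs1 i hi, hs2 i hi]
          decide
        · show (∑ i, (c0 {i | t i = 2} i + c1 {i | t i = 2} i + c2 {i | t i = 2} i)) = 1
          rw [Finset.sum_add_distrib, Finset.sum_add_distrib, hsum0, hsum1, hsum2]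
          exact one_one_one
        · show ((alg1 f1).op s fun i => h i t)
            = emb (∑ i, (c0 {i | t i = 2} i + c1 {i | t i = 2} i + c2 {i | t i = 2} i)
                * val2 (t i))
          rw [hgt t, hv0, hv1, hv2, f3_emb3]
          congr 1
          rw [show (∑ i, (c0 {i | t i = 2} i + c1 {i | t i = 2} i + c2 {i | t i = 2} i)
              * val2 (t i)) = ∑ i, (c0 {i | t i = 2} i * val2 (t i)
                + c1 {i | t i = 2} i * val2 (t i) + c2 {i | t i = 2} i * val2 (t i)) from
            Finset.sum_congr rfl (fun i _ => by ring)]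
          rw [Finset.sum_add_distrib, Finset.sum_add_distrib]

lemma coeff_swap {n : ℕ} {g : Op (Fin 3) n} {V : Finset (Fin n)}
    {c : Set (Fin n) → Fin n → ZMod 2}
    (H : ∀ t : Fin n → Fin 3,
      ((∀ i ∈ V, t i = 2) → g t = 2) ∧
      ((∃ i ∈ V, t i ≠ 2) →
        (∀ i, t i = 2 → c {i | t i = 2} i = 0) ∧
        (∑ i, c {i | t i = 2} i) = 1 ∧
        g t = emb (∑ i, c {i | t i = 2} i * val2 (t i))))
    (a : Fin n → Fin 3) (p q : Fin n)
    (hsym : g (fun m => a (Equiv.swap p q m)) = g a)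
    (htrig : ∃ i ∈ V, a i ≠ 2)
    (hp : a p = 1) (hq : a q = 0) :
    c {i | a i = 2} q = c {i | a i = 2} p := by
  classical
  have hsw : ∀ i, a (Equiv.swap p q i) = 2 ↔ a i = 2 := by
    intro i
    rcases eq_or_ne i p with rfl | hip
    · rw [Equiv.swap_apply_left, hp, hq]; decide
    · rcases eq_or_ne i q with rfl | hiq
      · rw [Equiv.swap_apply_right, hp, hq]; decide
      · rw [Equiv.swap_apply_of_ne_of_ne hip hiq]
  have hPset : {i | a (Equiv.swap p q i) = 2} = {i | a i = 2} := by
    ext i; exact hsw i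
  have btrig : ∃ i ∈ V, a (Equiv.swap p q i) ≠ 2 := by
    obtain ⟨i, hi, hne⟩ := htrig
    exact ⟨i, hi, fun hcc => hne ((hsw i).mp hcc)⟩
  obtain ⟨_, _, hvb⟩ := (H (fun m => a (Equiv.swap p q m))).2 btrig
  obtain ⟨_, _, hva⟩ := (H a).2 htrig
  rw [hPset] at hvb
  have hsums : (∑ i, c {i | a i = 2} i * val2 (a (Equiv.swap p q i)))
      = ∑ i, c {i | a i = 2} i * val2 (a i) :=
    emb_inj _ _ (by rw [← hvb, ← hva, hsym])
  have hre : (∑ i, c {i | a i = 2} i * val2 (a (Equiv.swap p q i)))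
      = ∑ i, c {i | a i = 2} (Equiv.swap p q i) * val2 (a i) := by
    have h2 := Equiv.sum_comp (Equiv.swap p q)
      (fun i => c {i | a i = 2} (Equiv.swap p q i) * val2 (a i))
    rw [← h2]
    apply Finset.sum_congr rfl
    intro i _
    simp [Equiv.swap_apply_self]
  rw [hre] at hsums
  -- split off the p term
  have hsplit1 := Finset.add_sum_erase Finset.univ
    (fun i => c {i | a i = 2} (Equiv.swap p q i) * val2 (a i)) (Finset.mem_univ p)
  have hsplit2 := Finset.add_sum_erase Finset.univ
    (fun i => c {i | a i = 2} i * val2 (a i)) (Finset.mem_univ p)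
  have herase : (∑ i ∈ Finset.univ.erase p,
        c {i | a i = 2} (Equiv.swap p q i) * val2 (a i))
      = ∑ i ∈ Finset.univ.erase p, c {i | a i = 2} i * val2 (a i) := by
    apply Finset.sum_congr rfl
    intro i hi
    rcases eq_or_ne i q with rfl | hiq
    · rw [hq]
      show _ * val2 0 = _ * val2 0
      rw [show val2 0 = 0 from rfl, mul_zero, mul_zero]
    · rw [Equiv.swap_apply_of_ne_of_ne (Finset.ne_of_mem_erase hi) hiq]
  rw [← hsplit1, ← hsplit2, herase] at hsums
  have h5 : c {i | a i = 2} (Equiv.swap p q p) * val2 (a p)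
      = c {i | a i = 2} p * val2 (a p) := add_right_cancel hsums
  rw [Equiv.swap_apply_left, hp] at h5
  rw [show val2 1 = 1 from rfl, mul_one, mul_one] at h5
  exact h5

lemma all_one {n : ℕ} (c : Fin n → ZMod 2) (P : Set (Fin n))
    (hsupp : ∀ i, i ∈ P → c i = 0) (hsum : ∑ i, c i = 1)
    (hconst : ∀ i i', i ∉ P → i' ∉ P → c i = c i') :
    ∀ i, i ∉ P → c i = 1 := by
  classical
  intro i hi
  rcases (by decide : ∀ x : ZMod 2, x = 0 ∨ x = 1) (c i) with h0 | h1
  · exfalso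
    have hz : ∀ x, c x = 0 := by
      intro x
      by_cases hx : x ∈ P
      · exact hsupp x hx
      · rw [hconst x i hx hi, h0]
    rw [Finset.sum_congr rfl (fun x _ => hz x)] at hsum
    simp at hsum
  · exact h1

def Tup (k l j : ℕ) (x y z : Fin 3) : Fin (k+l+j) → Fin 3 := fun i =>
  if (i : ℕ) < k then x else if (i : ℕ) < k + l then y else z

lemma Tup_lt {k l j : ℕ} {x y z : Fin 3} {i : Fin (k+l+j)} (h : (i:ℕ) < k) :
    Tup k l j x y z i = x := if_pos h

lemma Tup_mid {k l j : ℕ} {x y z : Fin 3} {i : Fin (k+l+j)} (h1 : ¬ (i:ℕ) < k)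
    (h2 : (i:ℕ) < k + l) : Tup k l j x y z i = y := by
  show (if (i:ℕ) < k then x else if (i:ℕ) < k + l then y else z) = y
  rw [if_neg h1, if_pos h2]

lemma Tup_hi {k l j : ℕ} {x y z : Fin 3} {i : Fin (k+l+j)} (h2 : ¬ (i:ℕ) < k + l) :
    Tup k l j x y z i = z := by
  show (if (i:ℕ) < k then x else if (i:ℕ) < k + l then y else z) = z
  rw [if_neg (by omega), if_neg h2]

lemma memJ {k l j : ℕ} {x y : Fin 3} (hx : x ≠ 2) (hy : y ≠ 2) (i : Fin (k+l+j)) :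
    Tup k l j x y 2 i = 2 ↔ k + l ≤ (i:ℕ) := by
  constructor
  · intro hv
    by_contra hcon
    push_neg at hcon
    by_cases h1 : (i:ℕ) < k
    · rw [Tup_lt h1] at hv; exact hx hv
    · rw [Tup_mid h1 (by omega)] at hv; exact hy hv
  · intro hge
    exact Tup_hi (by omega)

lemma memK {k l j : ℕ} {y z : Fin 3} (hy : y ≠ 2) (hz : z ≠ 2) (i : Fin (k+l+j)) :
    Tup k l j 2 y z i = 2 ↔ (i:ℕ) < k := by
  constructor
  · intro hv
    by_contra hcon
    by_cases h2 : (i:ℕ) < k + l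
    · rw [Tup_mid hcon h2] at hv; exact hy hv
    · rw [Tup_hi h2] at hv; exact hz hv
  · intro hge
    exact Tup_lt hge

lemma memL {k l j : ℕ} {x z : Fin 3} (hx : x ≠ 2) (hz : z ≠ 2) (i : Fin (k+l+j)) :
    Tup k l j x 2 z i = 2 ↔ (k ≤ (i:ℕ) ∧ (i:ℕ) < k + l) := by
  constructor
  · intro hv
    by_cases h1 : (i:ℕ) < k
    · rw [Tup_lt h1] at hv; exact absurd hv hx
    · by_cases h2 : (i:ℕ) < k + l
      · omega
      · rw [Tup_hi h2] at hv; exact absurd hv hz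
  · intro hmem
    exact Tup_mid (by omega) (by omega)

lemma trigger {n : ℕ} {g : Op (Fin 3) n} {V : Finset (Fin n)}
    {c : Set (Fin n) → Fin n → ZMod 2}
    (H : ∀ t : Fin n → Fin 3,
      ((∀ i ∈ V, t i = 2) → g t = 2) ∧
      ((∃ i ∈ V, t i ≠ 2) →
        (∀ i, t i = 2 → c {i | t i = 2} i = 0) ∧
        (∑ i, c {i | t i = 2} i) = 1 ∧
        g t = emb (∑ i, c {i | t i = 2} i * val2 (t i))))
    {i0 : Fin n} (hi0 : i0 ∈ V)
    (t : Fin n → Fin 3) (r : Fin n) (hr : t r ≠ 2)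
    (hsymt : ∀ π : Equiv.Perm (Fin n), (g fun m => t (π m)) = g t) :
    ∃ i ∈ V, t i ≠ 2 := by
  by_contra hno
  push_neg at hno
  have hg2 : g t = 2 := (H t).1 hno
  have hb2 : (g fun m => t (Equiv.swap i0 r m)) = 2 := by rw [hsymt _, hg2]
  have hbtrig : ∃ i ∈ V, t (Equiv.swap i0 r i) ≠ 2 :=
    ⟨i0, hi0, by rw [Equiv.swap_apply_left]; exact hr⟩
  obtain ⟨-, -, hval⟩ := (H (fun m => t (Equiv.swap i0 r m))).2 hbtrig
  rw [hb2] at hval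
  exact emb_ne_two _ hval.symm

lemma part2 : ∀ k l j : ℕ, 1 ≤ k → 1 ≤ l → 1 ≤ j →
    ¬ ∃ g : Op (Fin 3) (k + l + j), Clo (alg1 f1) g ∧
        ∀ x y z : Fin 3, SymmOnTuple g fun i =>
          if (i : ℕ) < k then x else if (i : ℕ) < k + l then y else z := by
  intro k l j hk hl hj
  rintro ⟨g, hclo, hsym⟩
  classical
  obtain ⟨V, ⟨i0, hi0⟩, c, H⟩ := inv_of_clo hclo
  have hsymT : ∀ x y z : Fin 3, SymmOnTuple g (Tup k l j x y z) := hsym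
  have pa : Fin (k+l+j) := ⟨0, by omega⟩
  have hne12 : (1 : Fin 3) ≠ 2 := by decide
  have hne02 : (0 : Fin 3) ≠ 2 := by decide
  set pa : Fin (k+l+j) := ⟨0, by omega⟩ with hpa
  set pb : Fin (k+l+j) := ⟨k, by omega⟩ with hpb
  set pc : Fin (k+l+j) := ⟨k+l, by omega⟩ with hpc
  have hpav : (pa : ℕ) = 0 := rfl
  have hpbv : (pb : ℕ) = k := rfl
  have hpcv : (pc : ℕ) = k + l := rfl
  -- Pattern J : tuple (1,0,2)
  have trigJ : ∃ i ∈ V, Tup k l j 1 0 2 i ≠ 2 :=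
    trigger H hi0 _ pa (by rw [Tup_lt (by omega)]; exact hne12) (hsymT 1 0 2)
  obtain ⟨hsJ, hsumJ, -⟩ := (H (Tup k l j 1 0 2)).2 trigJ
  have crossJ : ∀ p q : Fin (k+l+j), (p:ℕ) < k → k ≤ (q:ℕ) → (q:ℕ) < k+l →
      c {i | Tup k l j 1 0 2 i = 2} q = c {i | Tup k l j 1 0 2 i = 2} p := by
    intro p q hp hq1 hq2
    exact coeff_swap H (Tup k l j 1 0 2) p q (hsymT 1 0 2 (Equiv.swap p q)) trigJ
      (Tup_lt hp) (Tup_mid (by omega) (by omega))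
  have notmemJ : ∀ i : Fin (k+l+j), i ∉ {i | Tup k l j 1 0 2 i = 2} → (i:ℕ) < k + l := by
    intro i hi
    by_contra hc
    exact hi ((memJ hne12 hne02 i).mpr (by omega))
  have constJ : ∀ i i' : Fin (k+l+j), (i:ℕ) < k + l → (i':ℕ) < k + l →
      c {i | Tup k l j 1 0 2 i = 2} i = c {i | Tup k l j 1 0 2 i = 2} i' := by
    intro i i' hi hi'
    by_cases h1 : (i:ℕ) < k <;> by_cases h2 : (i':ℕ) < k
    · rw [← crossJ i pb h1 (by omega) (by omega), crossJ i' pb h2 (by omega) (by omega)]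
    · exact (crossJ i i' h1 (by omega) (by omega)).symm
    · exact crossJ i' i h2 (by omega) (by omega)
    · rw [crossJ pa i (by omega) (by omega) (by omega),
        crossJ pa i' (by omega) (by omega) (by omega)]
  have oneJ := all_one (c {i | Tup k l j 1 0 2 i = 2}) {i | Tup k l j 1 0 2 i = 2}
    hsJ hsumJ (fun i i' hi hi' => constJ i i' (notmemJ i hi) (notmemJ i' hi'))
  have cJ : ∀ i : Fin (k+l+j), c {i | Tup k l j 1 0 2 i = 2} i
      = if (i:ℕ) < k + l then 1 else 0 := by
    intro i
    by_cases hi : (i:ℕ) < k + l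
    · rw [if_pos hi]
      exact oneJ i (fun hmem => by
        have := (memJ hne12 hne02 i).mp hmem
        omega)
    · rw [if_neg hi]
      exact hsJ i ((memJ hne12 hne02 i).mpr (by omega))
  -- Pattern K : tuple (2,1,0)
  have trigK : ∃ i ∈ V, Tup k l j 2 1 0 i ≠ 2 :=
    trigger H hi0 _ pb (by rw [Tup_mid (by omega) (by omega)]; exact hne12) (hsymT 2 1 0)
  obtain ⟨hsK, hsumK, -⟩ := (H (Tup k l j 2 1 0)).2 trigK
  have crossK : ∀ p q : Fin (k+l+j), k ≤ (p:ℕ) → (p:ℕ) < k+l → k+l ≤ (q:ℕ) →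
      c {i | Tup k l j 2 1 0 i = 2} q = c {i | Tup k l j 2 1 0 i = 2} p := by
    intro p q hp1 hp2 hq
    exact coeff_swap H (Tup k l j 2 1 0) p q (hsymT 2 1 0 (Equiv.swap p q)) trigK
      (Tup_mid (by omega) (by omega)) (Tup_hi (by omega))
  have notmemK : ∀ i : Fin (k+l+j), i ∉ {i | Tup k l j 2 1 0 i = 2} → k ≤ (i:ℕ) := by
    intro i hi
    by_contra hc
    exact hi ((memK hne12 hne02 i).mpr (by omega))
  have constK : ∀ i i' : Fin (k+l+j), k ≤ (i:ℕ) → k ≤ (i':ℕ) →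
      c {i | Tup k l j 2 1 0 i = 2} i = c {i | Tup k l j 2 1 0 i = 2} i' := by
    intro i i' hi hi'
    by_cases h1 : (i:ℕ) < k + l <;> by_cases h2 : (i':ℕ) < k + l
    · rw [← crossK i pc (by omega) (by omega) (by omega),
        crossK i' pc (by omega) (by omega) (by omega)]
    · exact (crossK i i' (by omega) (by omega) (by omega)).symm
    · exact crossK i' i (by omega) (by omega) (by omega)
    · rw [crossK pb i (by omega) (by omega) (by omega),
        crossK pb i' (by omega) (by omega) (by omega)]
  have oneK := all_one (c {i | Tup k l j 2 1 0 i = 2}) {i | Tup k l j 2 1 0 i = 2}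
    hsK hsumK (fun i i' hi hi' => constK i i' (notmemK i hi) (notmemK i' hi'))
  have cK : ∀ i : Fin (k+l+j), c {i | Tup k l j 2 1 0 i = 2} i
      = if (i:ℕ) < k then 0 else 1 := by
    intro i
    by_cases hi : (i:ℕ) < k
    · rw [if_pos hi]
      exact hsK i ((memK hne12 hne02 i).mpr hi)
    · rw [if_neg hi]
      exact oneK i (fun hmem => by
        have := (memK hne12 hne02 i).mp hmem
        omega)
  -- Pattern L : tuple (1,2,0)
  have trigL : ∃ i ∈ V, Tup k l j 1 2 0 i ≠ 2 :=
    trigger H hi0 _ pa (by rw [Tup_lt (by omega)]; exact hne12) (hsymT 1 2 0)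
  obtain ⟨hsL, hsumL, -⟩ := (H (Tup k l j 1 2 0)).2 trigL
  have crossL : ∀ p q : Fin (k+l+j), (p:ℕ) < k → k+l ≤ (q:ℕ) →
      c {i | Tup k l j 1 2 0 i = 2} q = c {i | Tup k l j 1 2 0 i = 2} p := by
    intro p q hp hq
    exact coeff_swap H (Tup k l j 1 2 0) p q (hsymT 1 2 0 (Equiv.swap p q)) trigL
      (Tup_lt hp) (Tup_hi (by omega))
  have notmemL : ∀ i : Fin (k+l+j), i ∉ {i | Tup k l j 1 2 0 i = 2} →
      ((i:ℕ) < k ∨ k+l ≤ (i:ℕ)) := by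
    intro i hi
    by_contra hc
    exact hi ((memL hne12 hne02 i).mpr (by omega))
  have constL : ∀ i i' : Fin (k+l+j), ((i:ℕ) < k ∨ k+l ≤ (i:ℕ)) →
      ((i':ℕ) < k ∨ k+l ≤ (i':ℕ)) →
      c {i | Tup k l j 1 2 0 i = 2} i = c {i | Tup k l j 1 2 0 i = 2} i' := by
    intro i i' hi hi'
    by_cases h1 : (i:ℕ) < k <;> by_cases h2 : (i':ℕ) < k
    · rw [← crossL i pc h1 (by omega), crossL i' pc h2 (by omega)]
    · exact (crossL i i' h1 (by omega)).symm
    · exact crossL i' i h2 (by omega)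
    · rw [crossL pa i (by omega) (by omega), crossL pa i' (by omega) (by omega)]
  have oneL := all_one (c {i | Tup k l j 1 2 0 i = 2}) {i | Tup k l j 1 2 0 i = 2}
    hsL hsumL (fun i i' hi hi' => constL i i' (notmemL i hi) (notmemL i' hi'))
  have cL : ∀ i : Fin (k+l+j), c {i | Tup k l j 1 2 0 i = 2} i
      = if (k ≤ (i:ℕ) ∧ (i:ℕ) < k + l) then 0 else 1 := by
    intro i
    by_cases hi : (k ≤ (i:ℕ) ∧ (i:ℕ) < k + l)
    · rw [if_pos hi]
      exact hsL i ((memL hne12 hne02 i).mpr hi)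
    · rw [if_neg hi]
      exact oneL i (fun hmem => by
        have := (memL hne12 hne02 i).mp hmem
        omega)
  -- final contradiction
  have hpt : ∀ i : Fin (k+l+j),
      c {i | Tup k l j 2 1 0 i = 2} i + c {i | Tup k l j 1 2 0 i = 2} i
        + c {i | Tup k l j 1 0 2 i = 2} i = 0 := by
    intro i
    rw [cK i, cL i, cJ i]
    split_ifs <;> first | decide | omega
  have hsums3 : (∑ i, c {i | Tup k l j 2 1 0 i = 2} i)
      + (∑ i, c {i | Tup k l j 1 2 0 i = 2} i)
      + (∑ i, c {i | Tup k l j 1 0 2 i = 2} i) = 0 := by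
    rw [← Finset.sum_add_distrib, ← Finset.sum_add_distrib]
    exact Finset.sum_eq_zero (fun i _ => hpt i)
  rw [hsumK, hsumL, hsumJ] at hsums3
  exact absurd hsums3 (by decide)


/-- `Clo({f})` contains a WNU operation of every odd arity `m ≥ 3`, but
for all `k, l, j ≥ 1` it contains no operation of arity `k + l + j` that is symmetric on
all tuples consisting of `k` copies of `x`, `l` copies of `y` and `j` copies of `z`. -/
theorem f1_wnu_but_not_xyz_symmetric :
    (∀ m : ℕ, Odd m → 3 ≤ m → ∃ g : Op (Fin 3) m, Clo (alg1 f1) g ∧ IsWNU g) ∧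
    ∀ k l j : ℕ, 1 ≤ k → 1 ≤ l → 1 ≤ j →
      ¬ ∃ g : Op (Fin 3) (k + l + j), Clo (alg1 f1) g ∧
          ∀ x y z : Fin 3, SymmOnTuple g fun i =>
            if (i : ℕ) < k then x else if (i : ℕ) < k + l then y else z := by
  exact ⟨part1, part2⟩

end ZhukPaper
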